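/- Let F be a finite family of continuous self-maps of a complete metric space (X,d) that is eventually contracting. Then for every x ∈ X and every sequence (f_n)_{n∈ω} ∈ F^ω, the sequence (f_0 ∘ f_1 ∘ ⋯ ∘ f_n (x))_{n∈ω} is Cauchy and hence converges in X. -/

import Mathlib

open Filter Topology ENNReal

/-- The set `F^n` of all compositions of `n` members of a family `F` of self-maps. -/
def comps {X : Type*} (F : Set (X → X)) : ℕ → Set (X → X)
  | 0 => {id}
  | n + 1 => Set.image2 (· ∘ ·) (comps F n) F

/-- The oscillation of a family `G` of self-maps of a metric space. -/
noncomputable def oscFam {X : Type*} [MetricSpace X] (G : Set (X → X)) (t : ℝ≥0∞) : ℝ≥0∞ :=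
  ⨆ g ∈ G, ⨆ (x : X) (y : X) (_ : edist x y ≤ t), edist (g x) (g y)

section Aux

variable {X : Type*} [MetricSpace X] {F : Set (X → X)}

lemma comps_zero_eq : comps F 0 = {id} := rfl

lemma comps_succ_eq (n : ℕ) : comps F (n + 1) = Set.image2 (· ∘ ·) (comps F n) F := rfl

lemma edist_le_oscFam {G : Set (X → X)} {g : X → X} (hg : g ∈ G) {a b : X} {t : ℝ≥0∞}
    (hab : edist a b ≤ t) : edist (g a) (g b) ≤ oscFam G t := by
  calc edist (g a) (g b) = ⨆ (_ : edist a b ≤ t), edist (g a) (g b) := by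
        rw [iSup_pos hab]
    _ ≤ oscFam G t := le_iSup₂_of_le g hg (le_iSup₂_of_le a b le_rfl)

lemma comps_add (F : Set (X → X)) (a b : ℕ) :
    comps F (a + b) = Set.image2 (· ∘ ·) (comps F a) (comps F b) := by
  induction b with
  | zero =>
    simp [comps_zero_eq, Set.image2_singleton_right, Function.comp_id]
  | succ b ih =>
    have h1 : a + (b + 1) = (a + b) + 1 := rfl
    rw [h1, comps_succ_eq, ih, comps_succ_eq]
    exact Set.image2_assoc (fun _ _ _ => rfl)

lemma comp_mem_comps {f : X → X} (hf : f ∈ F) :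
    ∀ {n : ℕ} {W : X → X}, W ∈ comps F n → f ∘ W ∈ comps F (n + 1) := by
  intro n
  induction n with
  | zero =>
    intro W hW
    have hWid : W = id := by simpa [comps_zero_eq] using hW
    subst hWid
    rw [comps_succ_eq]
    have : f ∘ id = id ∘ f := rfl
    rw [this]
    exact Set.mem_image2_of_mem (by simp [comps_zero_eq]) hf
  | succ n ih =>
    intro W hW
    rw [comps_succ_eq] at hW
    obtain ⟨W', hW', h, hh, rfl⟩ := hW
    rw [comps_succ_eq]
    exact Set.mem_image2_of_mem (f := (· ∘ ·)) (a := f ∘ W') (b := h) (ih hW') hh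

lemma foldr_comp_mem :
    ∀ (l : List (X → X)), (∀ a ∈ l, a ∈ F) → l.foldr (· ∘ ·) id ∈ comps F l.length := by
  intro l
  induction l with
  | nil => intro _; simp [comps_zero_eq]
  | cons a l ih =>
    intro h
    have ha : a ∈ F := h a (List.mem_cons_self)
    have hl : l.foldr (· ∘ ·) id ∈ comps F l.length := ih (fun b hb => h b (List.mem_cons_of_mem _ hb))
    simpa using comp_mem_comps ha hl

lemma foldr_comp_eq (l : List (X → X)) (e : X → X) :
    l.foldr (· ∘ ·) e = l.foldr (· ∘ ·) id ∘ e := by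
  induction l with
  | nil => rfl
  | cons a l ih => simp [List.foldr_cons, ih]; rfl

lemma foldr_comp_append (l₁ l₂ : List (X → X)) :
    (l₁ ++ l₂).foldr (· ∘ ·) id = l₁.foldr (· ∘ ·) id ∘ l₂.foldr (· ∘ ·) id := by
  rw [List.foldr_append, foldr_comp_eq]

lemma comps_finite (hfin : F.Finite) : ∀ n, (comps F n).Finite := by
  intro n
  induction n with
  | zero => exact Set.finite_singleton _
  | succ n ih => exact Set.Finite.image2 _ ih hfin

lemma exists_edist_bound (x : X) {S : Set (X → X)} (hS : S.Finite) :
    ∃ C : ℝ≥0∞, C ≠ ⊤ ∧ ∀ W ∈ S, edist x (W x) ≤ C := by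
  classical
  refine ⟨hS.toFinset.sup (fun W => edist x (W x)), ?_, ?_⟩
  · have : hS.toFinset.sup (fun W => edist x (W x)) < ⊤ := by
      rw [Finset.sup_lt_iff (by simp : (⊥ : ℝ≥0∞) < ⊤)]
      intro W _
      exact edist_lt_top x (W x)
    exact this.ne
  · intro W hW
    exact Finset.le_sup (f := fun W => edist x (W x)) (hS.mem_toFinset.2 hW)

end Aux

/-- If a finite family `F` of continuous self-maps of a complete metric space is eventually
contracting, then for every `x ∈ X` and every sequence `(f_n)` of members of `F`, the sequence
`(f_0 ∘ f_1 ∘ ⋯ ∘ f_n (x))` is Cauchy and hence converges. -/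
theorem composition_sequence_cauchy {X : Type*} [MetricSpace X] [CompleteSpace X]
    (F : Set (X → X)) (hfin : F.Finite) (hcont : ∀ f ∈ F, Continuous f)
    (hev : ∀ t : ℝ≥0∞, 0 < t → t ≠ ⊤ →
      Tendsto (fun n => oscFam (comps F n) t) atTop (𝓝 0))
    (x : X) (g : ℕ → X → X) (hg : ∀ n, g n ∈ F) :
    CauchySeq (fun n => ((List.range (n + 1)).map g).foldr (· ∘ ·) id x) ∧
      ∃ z : X, Tendsto (fun n => ((List.range (n + 1)).map g).foldr (· ∘ ·) id x)
        atTop (𝓝 z) := by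
  classical
  -- membership of the partial compositions
  have hHmem : ∀ n : ℕ, ((List.range n).map g).foldr (· ∘ ·) id ∈ comps F n := by
    intro n
    have h := foldr_comp_mem (F := F) ((List.range n).map g)
      (by intro a ha; obtain ⟨i, _, rfl⟩ := List.mem_map.1 ha; exact hg i)
    simpa using h
  -- a finite bound on one-step displacements
  obtain ⟨t₁, ht₁top, ht₁⟩ := exists_edist_bound x hfin
  set t' : ℝ≥0∞ := t₁ + 1 with ht'def
  have ht'pos : 0 < t' := lt_of_lt_of_le zero_lt_one le_add_self
  have ht'top : t' ≠ ⊤ := ENNReal.add_ne_top.2 ⟨ht₁top, one_ne_top⟩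
  -- choose N with oscillation at scale 1 at most 1/2
  obtain ⟨N, hN1le, hNosc⟩ : ∃ N : ℕ, 1 ≤ N ∧ oscFam (comps F N) 1 ≤ 2⁻¹ := by
    have h2 : (0 : ℝ≥0∞) < 2⁻¹ := by simp
    have h := ((hev 1 zero_lt_one one_ne_top).eventually_lt_const h2).and
      (eventually_ge_atTop 1)
    obtain ⟨N, hN⟩ := h.exists
    exact ⟨N, hN.2, hN.1.le⟩
  have hN0 : (N : ℝ≥0∞) ≠ 0 := Nat.cast_ne_zero.2 (by omega)
  have hNt : (N : ℝ≥0∞) ≠ ⊤ := natCast_ne_top N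
  set c : ℝ≥0∞ := (2 * (N : ℝ≥0∞))⁻¹ with hcdef
  have hcpos : 0 < c := ENNReal.inv_pos.2 (by
    exact ENNReal.mul_ne_top (by simp) hNt)
  have hNc : (N : ℝ≥0∞) * c = 2⁻¹ := by
    rw [hcdef, ENNReal.mul_inv (Or.inl (by simp)) (Or.inl (by simp))]
    calc (N : ℝ≥0∞) * ((2 : ℝ≥0∞)⁻¹ * (N : ℝ≥0∞)⁻¹)
        = 2⁻¹ * ((N : ℝ≥0∞) * (N : ℝ≥0∞)⁻¹) := by ring
      _ = 2⁻¹ := by rw [ENNReal.mul_inv_cancel hN0 hNt, mul_one]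
  -- choose m beyond which oscillation at scale t' is at most c
  obtain ⟨m, hm⟩ : ∃ m : ℕ, ∀ j, m ≤ j → oscFam (comps F j) t' ≤ c := by
    have h := (hev t' ht'pos ht'top).eventually_lt_const hcpos
    obtain ⟨m, hm⟩ := eventually_atTop.1 h
    exact ⟨m, fun j hj => (hm j hj).le⟩
  -- chain lemma: appending k maps inside a composition of length ≥ m moves the point by ≤ k * c
  have chain : ∀ (k : ℕ) (V : X → X), V ∈ comps F k → ∀ (j : ℕ) (H : X → X),
      H ∈ comps F j → m ≤ j → edist (H (V x)) (H x) ≤ (k : ℝ≥0∞) * c := by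
    intro k
    induction k with
    | zero =>
      intro V hV j H hH hj
      have hVid : V = id := by simpa [comps_zero_eq] using hV
      subst hVid
      simp
    | succ k ih =>
      intro V hV j H hH hj
      rw [comps_succ_eq] at hV
      obtain ⟨V', hV', f, hf, rfl⟩ := hV
      have hHV' : H ∘ V' ∈ comps F (j + k) := by
        rw [comps_add]
        exact Set.mem_image2_of_mem hH hV'
      have step : edist (H (V' (f x))) (H (V' x)) ≤ c := by
        have h1 : edist (f x) x ≤ t' := by
          rw [edist_comm]
          exact le_trans (ht₁ f hf) le_self_add
        have h2 : edist ((H ∘ V') (f x)) ((H ∘ V') x) ≤ oscFam (comps F (j + k)) t' :=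
          edist_le_oscFam hHV' h1
        exact le_trans h2 (hm _ (le_trans hj (Nat.le_add_right _ _)))
      calc edist (H ((V' ∘ f) x)) (H x)
          ≤ edist (H (V' (f x))) (H (V' x)) + edist (H (V' x)) (H x) := edist_triangle _ _ _
        _ ≤ c + (k : ℝ≥0∞) * c := add_le_add step (ih V' hV' j H hH hj)
        _ = ((k + 1 : ℕ) : ℝ≥0∞) * c := by push_cast; ring
  -- partner lemma: every composition of length m + k is within 1 of some composition of length m
  have partner : ∀ k : ℕ, ∀ W ∈ comps F (m + k),
      ∃ H ∈ comps F m, edist (W x) (H x) ≤ 1 := by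
    intro k
    induction k using Nat.strong_induction_on with
    | _ k IH =>
      intro W hW
      by_cases hk : k < N
      · rw [comps_add] at hW
        obtain ⟨H, hH, V, hV, rfl⟩ := hW
        refine ⟨H, hH, ?_⟩
        calc edist ((H ∘ V) x) (H x) ≤ (k : ℝ≥0∞) * c := chain k V hV m H hH le_rfl
          _ ≤ (N : ℝ≥0∞) * c := mul_le_mul_left (by exact_mod_cast hk.le) c
          _ = 2⁻¹ := hNc
          _ ≤ 1 := by simp [ENNReal.inv_le_one]
      · push_neg at hk
        have hkpos : 0 < k := lt_of_lt_of_le (by omega : 0 < N) hk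
        have hsub : k - N < k := Nat.sub_lt hkpos (by omega)
        have hrw : m + k = N + (m + (k - N)) := by omega
        rw [hrw, comps_add] at hW
        obtain ⟨gN, hgN, W₀, hW₀, rfl⟩ := hW
        obtain ⟨H₀, hH₀, h01⟩ := IH (k - N) hsub W₀ hW₀
        have hmem : gN ∘ H₀ ∈ Set.image2 (· ∘ ·) (comps F m) (comps F N) := by
          rw [← comps_add, Nat.add_comm m N, comps_add]
          exact Set.mem_image2_of_mem hgN hH₀
        obtain ⟨H₁, hH₁, V₁, hV₁, hEq⟩ := hmem
        refine ⟨H₁, hH₁, ?_⟩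
        have e1 : edist (gN (W₀ x)) (gN (H₀ x)) ≤ 2⁻¹ :=
          le_trans (edist_le_oscFam hgN h01) hNosc
        have e2 : edist (gN (H₀ x)) (H₁ x) ≤ 2⁻¹ := by
          have hpt : gN (H₀ x) = H₁ (V₁ x) := (congrFun hEq x).symm
          rw [hpt]
          calc edist (H₁ (V₁ x)) (H₁ x) ≤ (N : ℝ≥0∞) * c := chain N V₁ hV₁ m H₁ hH₁ le_rfl
            _ = 2⁻¹ := hNc
        calc edist ((gN ∘ W₀) x) (H₁ x)
            ≤ edist (gN (W₀ x)) (gN (H₀ x)) + edist (gN (H₀ x)) (H₁ x) := edist_triangle _ _ _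
          _ ≤ 2⁻¹ + 2⁻¹ := add_le_add e1 e2
          _ = 1 := ENNReal.inv_two_add_inv_two
  -- global bound on the orbit
  have hfinU : (⋃ j ∈ Set.Iic m, comps F j).Finite :=
    Set.Finite.biUnion (Set.finite_Iic m) (fun j _ => comps_finite hfin j)
  obtain ⟨C₀, hC₀top, hC₀⟩ := exists_edist_bound x hfinU
  set B : ℝ≥0∞ := C₀ + 1 with hBdef
  have hBtop : B ≠ ⊤ := ENNReal.add_ne_top.2 ⟨hC₀top, one_ne_top⟩
  have hBpos : 0 < B := lt_of_lt_of_le zero_lt_one le_add_self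
  have horb : ∀ (n : ℕ) (W : X → X), W ∈ comps F n → edist x (W x) ≤ B := by
    intro n W hW
    rcases le_or_gt n m with h | h
    · have hmem : W ∈ ⋃ j ∈ Set.Iic m, comps F j :=
        Set.mem_biUnion (Set.mem_Iic.2 h) hW
      exact le_trans (hC₀ W hmem) le_self_add
    · have hn : n = m + (n - m) := by omega
      rw [hn] at hW
      obtain ⟨H, hH, hWH⟩ := partner (n - m) W hW
      have hHU : H ∈ ⋃ j ∈ Set.Iic m, comps F j :=
        Set.mem_biUnion (Set.mem_Iic.2 le_rfl) hH
      calc edist x (W x) ≤ edist x (H x) + edist (H x) (W x) := edist_triangle _ _ _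
        _ ≤ C₀ + 1 := add_le_add (hC₀ H hHU) (by rw [edist_comm]; exact hWH)
  -- splitting of the partial compositions
  have hsplit : ∀ a b : ℕ, a ≤ b → ∃ W ∈ comps F (b - a),
      ((List.range b).map g).foldr (· ∘ ·) id
        = ((List.range a).map g).foldr (· ∘ ·) id ∘ W := by
    intro a b hab
    refine ⟨((List.range (b - a)).map (fun i => g (a + i))).foldr (· ∘ ·) id, ?_, ?_⟩
    · have h := foldr_comp_mem (F := F) ((List.range (b - a)).map (fun i => g (a + i)))
        (by intro u hu; obtain ⟨i, _, rfl⟩ := List.mem_map.1 hu; exact hg _)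
      simpa using h
    · have h1 : b = a + (b - a) := by omega
      calc ((List.range b).map g).foldr (· ∘ ·) id
          = ((List.range (a + (b - a))).map g).foldr (· ∘ ·) id := by rw [← h1]
        _ = _ := by
            rw [List.range_add, List.map_append, foldr_comp_append, List.map_map]
            rfl
  -- key estimate
  set y : ℕ → X := fun n => ((List.range (n + 1)).map g).foldr (· ∘ ·) id x with hydef
  have hkey : ∀ a b : ℕ, a ≤ b → edist (y a) (y b) ≤ oscFam (comps F (a + 1)) B := by
    intro a b hab
    obtain ⟨W, hWmem, hWeq⟩ := hsplit (a + 1) (b + 1) (by omega)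
    have hyb : y b = ((List.range (a + 1)).map g).foldr (· ∘ ·) id (W x) := by
      show ((List.range (b + 1)).map g).foldr (· ∘ ·) id x = _
      rw [hWeq]; rfl
    rw [hyb]
    exact edist_le_oscFam (hHmem (a + 1)) (horb _ W hWmem)
  -- Cauchy
  have hcauchy : CauchySeq y := by
    rw [EMetric.cauchySeq_iff]
    intro ε hε
    obtain ⟨N₀, hN₀⟩ := eventually_atTop.1 ((hev B hBpos hBtop).eventually_lt_const hε)
    refine ⟨N₀, fun p hp q hq => ?_⟩
    rcases le_total q p with h | h
    · rw [edist_comm]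
      exact lt_of_le_of_lt (hkey q p h) (hN₀ (q + 1) (by omega))
    · exact lt_of_le_of_lt (hkey p q h) (hN₀ (p + 1) (by omega))
  exact ⟨hcauchy, cauchySeq_tendsto_of_complete hcauchy⟩
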